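/- Suppose the candidates are ordered so that p_1/t_1 ≥ p_2/t_2 ≥ … ≥ p_N/t_N. Then for every permutation σ of {1,…,N}, the expected solving time of the identity order is minimal: E(id) ≤ E(σ). -/

import Mathlib

open Finset

namespace SoloAux

/-- `F l = Σ_l t_l ∏_{j<l} (1-p_j)` as a fold over a list of pairs `(p, t)`. -/
noncomputable def F : List (ℝ × ℝ) → ℝ
  | [] => 0
  | x :: xs => x.2 + (1 - x.1) * F xs

/-- Product of `(1 - p)` over the list. -/
noncomputable def Pr : List (ℝ × ℝ) → ℝ
  | [] => 1
  | x :: xs => (1 - x.1) * Pr xs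

def Good (x : ℝ × ℝ) : Prop := 0 ≤ x.1 ∧ x.1 ≤ 1 ∧ 0 < x.2

noncomputable def R (x : ℝ × ℝ) : ℝ := x.1 / x.2

lemma swap2 (a b : ℝ × ℝ) (w : List (ℝ × ℝ)) (ha : Good a) (hb : Good b)
    (hr : R b ≤ R a) : F (a :: b :: w) ≤ F (b :: a :: w) := by
  obtain ⟨ha0, ha1, ha2⟩ := ha
  obtain ⟨hb0, hb1, hb2⟩ := hb
  have h : b.1 * a.2 ≤ a.1 * b.2 := by
    rw [R, R, div_le_div_iff₀ hb2 ha2] at hr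
    exact hr
  simp only [F]
  nlinarith [h]

lemma F_cons_mono (x : ℝ × ℝ) (hx : x.1 ≤ 1) {l l' : List (ℝ × ℝ)}
    (h : F l ≤ F l') : F (x :: l) ≤ F (x :: l') := by
  simp only [F]
  exact add_le_add (le_refl _) (mul_le_mul_of_nonneg_left h (by linarith : (0:ℝ) ≤ 1 - x.1))

lemma bubble (a : ℝ × ℝ) (ha : Good a) :
    ∀ (u v : List (ℝ × ℝ)), (∀ b ∈ u, Good b ∧ R b ≤ R a) →
      F (a :: (u ++ v)) ≤ F (u ++ a :: v) := by
  intro u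
  induction u with
  | nil => intro v _; simp
  | cons b u' ih =>
    intro v hu
    obtain ⟨hbg, hbr⟩ := hu b (by simp)
    have h1 : F (a :: b :: (u' ++ v)) ≤ F (b :: a :: (u' ++ v)) :=
      swap2 a b (u' ++ v) ha hbg hbr
    have h2 : F (a :: (u' ++ v)) ≤ F (u' ++ a :: v) := by
      refine ih v fun c hc => hu c (by simp [hc])
    calc F (a :: (b :: u' ++ v)) = F (a :: b :: (u' ++ v)) := by simp
      _ ≤ F (b :: a :: (u' ++ v)) := h1
      _ ≤ F (b :: (u' ++ a :: v)) := F_cons_mono b hbg.2.1 h2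
      _ = F ((b :: u') ++ a :: v) := by simp [F]

lemma F_mono_perm : ∀ (l l' : List (ℝ × ℝ)), l.Perm l' → (∀ x ∈ l, Good x) →
    l.Pairwise (fun x y => R y ≤ R x) → F l ≤ F l' := by
  intro l
  induction l with
  | nil => intro l' hperm _ _; rw [hperm.nil_eq]
  | cons a rest ih =>
    intro l' hperm hgood hpw
    have hmem : a ∈ l' := hperm.mem_iff.mp List.mem_cons_self
    obtain ⟨u, v, rfl⟩ := List.append_of_mem hmem
    have hperm' : rest.Perm (u ++ v) :=
      (hperm.trans List.perm_middle).cons_inv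
    have hga : Good a := hgood a List.mem_cons_self
    have hrest : F rest ≤ F (u ++ v) := by
      refine ih (u ++ v) hperm' (fun x hx => hgood x (List.mem_cons_of_mem a hx))
        (List.Pairwise.sublist (List.sublist_cons_self a rest) hpw)
    have hu : ∀ b ∈ u, Good b ∧ R b ≤ R a := by
      intro b hb
      have hb' : b ∈ a :: rest := hperm.symm.mem_iff.mp (by simp [hb])
      rcases List.mem_cons.mp hb' with h | h
      · exact ⟨h ▸ hga, h ▸ le_refl _⟩
      · exact ⟨hgood b (List.mem_cons_of_mem a h),
          (List.rel_of_pairwise_cons hpw h)⟩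
    calc F (a :: rest) ≤ F (a :: (u ++ v)) := F_cons_mono a hga.2.1 hrest
      _ ≤ F (u ++ a :: v) := bubble a hga u v hu

lemma F_append (xs ys : List (ℝ × ℝ)) : F (xs ++ ys) = F xs + Pr xs * F ys := by
  induction xs with
  | nil => simp [F, Pr]
  | cons x xs ih => simp [F, Pr, ih]; ring

lemma Pr_append (xs ys : List (ℝ × ℝ)) : Pr (xs ++ ys) = Pr xs * Pr ys := by
  induction xs with
  | nil => simp [Pr]
  | cons x xs ih => simp [Pr, ih]; ring

/-- The list associated to functions `a b : ℕ → ℝ` (values at `1, …, N`). -/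
def L (a b : ℕ → ℝ) (N : ℕ) : List (ℝ × ℝ) :=
  (List.range N).map fun i => (a (1 + i), b (1 + i))

lemma Pr_eq (a b : ℕ → ℝ) (N : ℕ) :
    Pr (L a b N) = ∏ j ∈ Finset.Icc 1 N, (1 - a j) := by
  induction N with
  | zero => simp [L, Pr]
  | succ N ih =>
    rw [Finset.prod_Icc_succ_top (Nat.le_add_left 1 N)]
    rw [L, List.range_succ, List.map_append, Pr_append, ← L, ih]
    simp [Pr, Nat.add_comm 1 N]

lemma F_eq (a b : ℕ → ℝ) (N : ℕ) :
    F (L a b N) = ∑ l ∈ Finset.Icc 1 N, b l * ∏ j ∈ Finset.Icc 1 (l - 1), (1 - a j) := by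
  induction N with
  | zero => simp [L, F]
  | succ N ih =>
    rw [Finset.sum_Icc_succ_top (Nat.le_add_left 1 N)]
    rw [L, List.range_succ, List.map_append, F_append, ← L, ih, Pr_eq]
    simp [F, Nat.add_comm 1 N, mul_comm]

lemma key (a b : ℕ → ℝ) (N : ℕ) :
    ∑ k ∈ Finset.Icc 1 N, (∑ l ∈ Finset.Icc 1 k, b l) *
        (∏ j ∈ Finset.Icc 1 (k - 1), (1 - a j)) * a k
      = (∑ l ∈ Finset.Icc 1 N, b l * ∏ j ∈ Finset.Icc 1 (l - 1), (1 - a j))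
        - (∑ l ∈ Finset.Icc 1 N, b l) * ∏ j ∈ Finset.Icc 1 N, (1 - a j) := by
  induction N with
  | zero => simp
  | succ N ih =>
    rw [Finset.sum_Icc_succ_top (Nat.le_add_left 1 N),
      Finset.sum_Icc_succ_top (Nat.le_add_left 1 N) b,
      Finset.sum_Icc_succ_top (Nat.le_add_left 1 N)
        (fun l => b l * ∏ j ∈ Finset.Icc 1 (l - 1), (1 - a j)),
      Finset.prod_Icc_succ_top (Nat.le_add_left 1 N)]
    simp only [Nat.add_sub_cancel]
    linear_combination ih

end SoloAux

/-- Expected solving time of examining candidates `1,…,N` in the order given by the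
permutation `σ` of `{1,…,N}`:
`E(σ) = Σ_{k=1}^N (Σ_{l=1}^k t_{σ(l)}) · (∏_{j=1}^{k−1} (1 − p_{σ(j)})) · p_{σ(k)}`. -/
noncomputable def solveTime (N : ℕ) (p t : ℕ → ℝ) (σ : Equiv.Perm ℕ) : ℝ :=
  ∑ k ∈ Finset.Icc 1 N, (∑ l ∈ Finset.Icc 1 k, t (σ l)) *
    (∏ j ∈ Finset.Icc 1 (k - 1), (1 - p (σ j))) * p (σ k)

/-- If the candidates are ordered so that `p_1/t_1 ≥ p_2/t_2 ≥ … ≥ p_N/t_N`, then for every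
permutation `σ` of `{1,…,N}` the expected solving time of the identity order is minimal. -/
theorem solomonoff_strategy_optimal
    (N : ℕ) (hN : 1 ≤ N) (p t : ℕ → ℝ)
    (hp : ∀ i ∈ Finset.Icc 1 N, p i ∈ Set.Icc (0 : ℝ) 1)
    (ht : ∀ i ∈ Finset.Icc 1 N, 0 < t i)
    (hord : ∀ i ∈ Finset.Icc 1 (N - 1), p (i + 1) / t (i + 1) ≤ p i / t i)
    (σ : Equiv.Perm ℕ) (hσ : ∀ i, i ∉ Finset.Icc 1 N → σ i = i) :
    solveTime N p t (Equiv.refl ℕ) ≤ solveTime N p t σ := by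
  classical
  open SoloAux in
  -- support of σ is inside Icc 1 N
  have hsupp : {i | σ i ≠ i} ⊆ ↑(Finset.Icc 1 N) := by
    intro i hi
    by_contra hmem
    exact hi (hσ i hmem)
  -- σ maps Icc 1 N into itself
  have hmaps : ∀ i ∈ Finset.Icc 1 N, σ i ∈ Finset.Icc 1 N := by
    intro i hi
    by_contra hmem
    have h1 : σ (σ i) = σ i := hσ (σ i) hmem
    have h2 : σ i = i := σ.injective h1
    rw [h2] at hmem
    exact hmem hi
  -- image of Icc 1 N under σ equals Icc 1 N
  have himg : Finset.image σ (Finset.Icc 1 N) = Finset.Icc 1 N := by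
    apply Finset.eq_of_subset_of_card_le
    · intro j hj
      obtain ⟨i, hi, rfl⟩ := Finset.mem_image.mp hj
      exact hmaps i hi
    · rw [Finset.card_image_of_injective _ σ.injective]
  -- multiset invariance
  have hval : Multiset.map σ (Finset.Icc 1 N).val = (Finset.Icc 1 N).val := by
    rw [← Finset.image_val_of_injOn (σ.injective.injOn), himg]
  -- list permutation
  have hlistperm : (SoloAux.L (fun i => p (σ i)) (fun i => t (σ i)) N).Perm
      (SoloAux.L p t N) := by
    rw [← Multiset.coe_eq_coe]
    have hL : ∀ (a b : ℕ → ℝ), (↑(SoloAux.L a b N) : Multiset (ℝ × ℝ)) =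
        Multiset.map (fun j => (a j, b j)) (Finset.Icc 1 N).val := by
      intro a b
      have hicc : (Finset.Icc 1 N).val = ↑(List.range' 1 N) := rfl
      rw [hicc, SoloAux.L, ← Multiset.map_coe]
      have : (List.range' 1 N) = (List.range N).map (1 + ·) := by
        rw [List.range_eq_range', List.map_add_range']
      rw [this, ← Multiset.map_coe, Multiset.map_map]
      rfl
    rw [hL, hL]
    rw [show (fun j => (p (σ j), t (σ j))) = ((fun j => (p j, t j)) ∘ ⇑σ) from rfl,
      ← Multiset.map_map, hval]
  -- goodness
  have hgood : ∀ x ∈ SoloAux.L p t N, SoloAux.Good x := by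
    intro x hx
    rw [SoloAux.L, List.mem_map] at hx
    obtain ⟨i, hi, rfl⟩ := hx
    rw [List.mem_range] at hi
    have hmem : 1 + i ∈ Finset.Icc 1 N := by
      rw [Finset.mem_Icc]; omega
    exact ⟨(hp _ hmem).1, (hp _ hmem).2, ht _ hmem⟩
  -- ratio monotonicity
  have hmono : ∀ i j, 1 ≤ i → i ≤ j → j ≤ N → p j / t j ≤ p i / t i := by
    intro i j hi hij hjN
    obtain ⟨d, rfl⟩ := Nat.exists_eq_add_of_le hij
    clear hij
    induction d with
    | zero => simp
    | succ d ihd =>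
      have hd : i + d ≤ N := by omega
      have hmem : i + d ∈ Finset.Icc 1 (N - 1) := by
        rw [Finset.mem_Icc]; omega
      calc p (i + (d + 1)) / t (i + (d + 1)) = p (i + d + 1) / t (i + d + 1) := by
            ring_nf
        _ ≤ p (i + d) / t (i + d) := hord _ hmem
        _ ≤ p i / t i := ihd hd
  -- pairwise sortedness of identity list
  have hpw : (SoloAux.L p t N).Pairwise (fun x y => SoloAux.R y ≤ SoloAux.R x) := by
    rw [SoloAux.L, List.pairwise_map]
    apply List.Pairwise.imp_of_mem (R := fun a b => a < b)
    · intro i j hi hj hlt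
      rw [List.mem_range] at hi hj
      exact hmono (1 + i) (1 + j) (by omega) (by omega) (by omega)
    · exact List.pairwise_lt_range
  -- main list inequality
  have hFle : SoloAux.F (SoloAux.L p t N) ≤
      SoloAux.F (SoloAux.L (fun i => p (σ i)) (fun i => t (σ i)) N) :=
    SoloAux.F_mono_perm _ _ hlistperm.symm hgood hpw
  -- invariance of the total sum and total product
  have hT : ∑ l ∈ Finset.Icc 1 N, t (σ l) = ∑ l ∈ Finset.Icc 1 N, t l :=
    Equiv.Perm.sum_comp σ _ t hsupp
  have hP : ∏ j ∈ Finset.Icc 1 N, (1 - p (σ j)) = ∏ j ∈ Finset.Icc 1 N, (1 - p j) :=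
    Equiv.Perm.prod_comp σ _ (fun j => 1 - p j) hsupp
  -- rewrite both solveTimes
  have hEσ : solveTime N p t σ =
      SoloAux.F (SoloAux.L (fun i => p (σ i)) (fun i => t (σ i)) N)
        - (∑ l ∈ Finset.Icc 1 N, t l) * ∏ j ∈ Finset.Icc 1 N, (1 - p j) := by
    rw [solveTime, SoloAux.key (fun i => p (σ i)) (fun i => t (σ i)) N,
      SoloAux.F_eq, hT, hP]
  have hEid : solveTime N p t (Equiv.refl ℕ) =
      SoloAux.F (SoloAux.L p t N)
        - (∑ l ∈ Finset.Icc 1 N, t l) * ∏ j ∈ Finset.Icc 1 N, (1 - p j) := by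
    rw [solveTime]
    simp only [Equiv.refl_apply]
    rw [SoloAux.key p t N, SoloAux.F_eq]
  rw [hEσ, hEid]
  linarith [hFle]
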